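/- Let Z be a nonempty finite type, P : Z → Z → ℝ a row-stochastic matrix that is irreducible, W ⊆ Z with at least two elements, and a, b ∈ W with a ≠ b. Then lim_{m→∞} G_b(m) = P(R^W_{a,b}), where G_b(m) is the sum of Prob(x) over all paths x of length m with x₀ = a that visit W∖{a} and whose first state belonging to W∖{a} is b. -/

import Mathlib

open scoped Classical

/-- Probability of a path `x = (x₀, …, x_m)` of length `m`:
`Prob(x) = ∏_{i=1}^m P(x_{i-1}, x_i)`. -/
def pathProb {Z : Type*} (P : Z → Z → ℝ) {m : ℕ} (x : Fin (m + 1) → Z) : ℝ :=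
  ∏ i : Fin m, P (x i.castSucc) (x i.succ)

/-- `P` is a row-stochastic matrix. -/
def RowStochastic {Z : Type*} [Fintype Z] (P : Z → Z → ℝ) : Prop :=
  (∀ a b, 0 ≤ P a b) ∧ ∀ a, ∑ b, P a b = 1

/-- The chain is irreducible: for all `a b` there is `m ≥ 1` with `(P^m)(a,b) > 0`. -/
def IsIrreducibleChain {Z : Type*} [Fintype Z] [DecidableEq Z] (P : Z → Z → ℝ) : Prop :=
  ∀ a b : Z, ∃ m : ℕ, 1 ≤ m ∧ 0 < (Matrix.of P ^ m) a b

/-- `F_b(m)`: the sum of `Prob(x)` over all paths `x` of length `m` with `x₀ = a` that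
visit `W` and whose first state belonging to `W` is `b`. -/
noncomputable def firstVisitProb {Z : Type*} [Fintype Z] (P : Z → Z → ℝ) (W : Finset Z)
    (a b : Z) (m : ℕ) : ℝ :=
  ∑ x ∈ Finset.univ.filter (fun x : Fin (m + 1) → Z =>
      x 0 = a ∧ ∃ j : Fin (m + 1), x j = b ∧ ∀ i < j, x i ∉ W),
    pathProb P x

/-- The probability `P(R^W_{a,b})` of the set of `W`-arrows from `a` to `b`:
the sum over all lengths `m ≥ 1` of the probabilities of paths `x` of length `m`
with `x₀ = a`, `x_m = b`, and `x_i ∈ W → x_i = a` for every `i < m`. -/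
noncomputable def arrowProb {Z : Type*} [Fintype Z] (P : Z → Z → ℝ) (W : Finset Z)
    (a b : Z) : ℝ :=
  ∑' m : ℕ, ∑ x ∈ Finset.univ.filter (fun x : Fin (m + 1 + 1) → Z =>
      x 0 = a ∧ x (Fin.last (m + 1)) = b ∧
      ∀ i : Fin (m + 1 + 1), i < Fin.last (m + 1) → x i ∈ W → x i = a),
    pathProb P x

section aux
set_option linter.unusedSectionVars false
variable {Z : Type*} [Fintype Z] (P : Z → Z → ℝ)

lemma pathProb_snoc {m : ℕ} (y : Fin (m + 1) → Z) (z : Z) :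
    pathProb P (Fin.snoc y z : Fin (m + 1 + 1) → Z) = pathProb P y * P (y (Fin.last m)) z := by
  unfold pathProb
  rw [Fin.prod_univ_castSucc]
  congr 1
  · refine Finset.prod_congr rfl fun i _ => ?_
    rw [Fin.snoc_castSucc, Fin.succ_castSucc, Fin.snoc_castSucc]
  · rw [Fin.succ_last, Fin.snoc_last, Fin.snoc_castSucc]

lemma pathProb_nonneg (h0 : ∀ a b, 0 ≤ P a b) {m : ℕ} (x : Fin (m + 1) → Z) :
    0 ≤ pathProb P x :=
  Finset.prod_nonneg fun _ _ => h0 _ _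

lemma sum_snoc (n : ℕ) (f : (Fin (n + 1) → Z) → ℝ) :
    ∑ x : Fin (n + 1) → Z, f x = ∑ y : Fin n → Z, ∑ z : Z, f (Fin.snoc y z) := by
  rw [← (Fin.snocEquiv (fun _ => Z)).sum_comp f, Fintype.sum_prod_type, Finset.sum_comm]
  rfl

lemma snoc_apply_zero {n : ℕ} (y : Fin (n + 1) → Z) (z : Z) :
    (Fin.snoc y z : Fin (n + 1 + 1) → Z) 0 = y 0 := by
  have h : ((0 : Fin (n + 1 + 1))) = Fin.castSucc (0 : Fin (n + 1)) := rfl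
  rw [h, Fin.snoc_castSucc]

lemma sum_pathProb (hP : RowStochastic P) (a : Z) :
    ∀ m : ℕ, ∑ x ∈ Finset.univ.filter (fun x : Fin (m + 1) → Z => x 0 = a), pathProb P x = 1 := by
  intro m
  induction m with
  | zero =>
    have h : Finset.univ.filter (fun x : Fin 1 → Z => x 0 = a) = {fun _ => a} := by
      ext x
      simp only [Finset.mem_filter, Finset.mem_univ, true_and, Finset.mem_singleton]
      constructor
      · intro h; funext i; have : i = 0 := Subsingleton.elim _ _; rw [this, h]
      · intro h; rw [h]
    rw [h, Finset.sum_singleton]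
    simp [pathProb]
  | succ m ih =>
    rw [Finset.sum_filter, sum_snoc]
    have key : ∀ y : Fin (m + 1) → Z,
        (∑ z : Z, if (Fin.snoc y z : Fin (m + 1 + 1) → Z) 0 = a
          then pathProb P (Fin.snoc y z : Fin (m + 1 + 1) → Z) else 0)
        = if y 0 = a then pathProb P y else 0 := by
      intro y
      simp_rw [snoc_apply_zero]
      by_cases h : y 0 = a
      · simp only [h, if_true]
        simp_rw [pathProb_snoc]
        rw [← Finset.mul_sum, hP.2, mul_one]
      · simp [h]
    simp_rw [key]
    rw [← Finset.sum_filter]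
    exact ih

def QP {Z : Type*} (V : Finset Z) (a b : Z) (n : ℕ) (y : Fin (n + 1) → Z) : Prop :=
  y 0 = a ∧ ∃ j : Fin (n + 1), y j = b ∧ ∀ i < j, y i ∉ V

def AP {Z : Type*} (W : Finset Z) (a b : Z) (m : ℕ) (x : Fin (m + 1 + 1) → Z) : Prop :=
  x 0 = a ∧ x (Fin.last (m + 1)) = b ∧
    ∀ i : Fin (m + 1 + 1), i < Fin.last (m + 1) → x i ∈ W → x i = a

noncomputable def arrowTerm (W : Finset Z) (a b : Z) (m : ℕ) : ℝ :=
  ∑ x ∈ Finset.univ.filter (fun x : Fin (m + 1 + 1) → Z =>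
      x 0 = a ∧ x (Fin.last (m + 1)) = b ∧
      ∀ i : Fin (m + 1 + 1), i < Fin.last (m + 1) → x i ∈ W → x i = a),
    pathProb P x

lemma arrowProb_eq_tsum (W : Finset Z) (a b : Z) :
    arrowProb P W a b = ∑' m : ℕ, arrowTerm P W a b m := rfl

lemma firstVisitProb_eq (V : Finset Z) (a b : Z) (n : ℕ) :
    firstVisitProb P V a b n = ∑ y ∈ Finset.univ.filter (QP V a b n), pathProb P y := by
  unfold firstVisitProb
  refine Finset.sum_congr ?_ fun _ _ => rfl
  ext x
  simp only [Finset.mem_filter, QP]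

lemma arrowTerm_eq (W : Finset Z) (a b : Z) (m : ℕ) :
    arrowTerm P W a b m = ∑ x ∈ Finset.univ.filter (AP W a b m), pathProb P x := by
  unfold arrowTerm
  refine Finset.sum_congr ?_ fun _ _ => rfl
  ext x
  simp only [Finset.mem_filter, AP]

lemma firstVisit_succ (hP : RowStochastic P) (V W : Finset Z) (a b : Z)
    (hbV : b ∈ V) (hV : ∀ c, c ∈ V ↔ c ∈ W ∧ c ≠ a) (m : ℕ) :
    firstVisitProb P V a b (m + 1)
      = firstVisitProb P V a b m + arrowTerm P W a b m := by
  have hV' : ∀ c, c ∉ V ↔ (c ∈ W → c = a) := by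
    intro c; rw [hV]; tauto
  have hsplit : ∀ (y : Fin (m + 1) → Z) (z : Z),
      (if QP V a b (m + 1) (Fin.snoc y z) then pathProb P (Fin.snoc y z : Fin (m + 1 + 1) → Z) else 0)
      = (if QP V a b m y then pathProb P (Fin.snoc y z : Fin (m + 1 + 1) → Z) else 0)
        + (if AP W a b m (Fin.snoc y z) then pathProb P (Fin.snoc y z : Fin (m + 1 + 1) → Z) else 0) := by
    intro y z
    set x : Fin (m + 1 + 1) → Z := Fin.snoc y z with hx
    have hx0 : x 0 = y 0 := snoc_apply_zero y z
    have hxc : ∀ i : Fin (m + 1), x i.castSucc = y i := fun i => by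
      rw [hx]; exact Fin.snoc_castSucc ..
    have hdisj : ¬ (QP V a b m y ∧ AP W a b m x) := by
      rintro ⟨⟨h0, j, hjb, hjW⟩, ⟨_, _, hA'⟩⟩
      have hxb : x j.castSucc = b := by rw [hxc]; exact hjb
      have := hA' j.castSucc (Fin.castSucc_lt_last j) (by rw [hxb]; exact ((hV b).mp hbV).1)
      rw [hxb] at this
      exact ((hV b).mp hbV).2 this
    have hiff : QP V a b (m + 1) x ↔ QP V a b m y ∨ AP W a b m x := by
      constructor
      · rintro ⟨h0, j, hjb, hjW⟩
        by_cases hj : j = Fin.last (m + 1)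
        · right
          exact ⟨h0, by rw [← hj]; exact hjb,
            fun i hi => (hV' (x i)).mp (hjW i (hj ▸ hi))⟩
        · left
          obtain ⟨j', rfl⟩ := Fin.exists_castSucc_eq.mpr hj
          refine ⟨by rw [← hx0]; exact h0, j', by rw [← hxc]; exact hjb, ?_⟩
          intro i hi
          have := hjW i.castSucc (Fin.castSucc_lt_castSucc_iff.mpr hi)
          rw [hxc] at this; exact this
      · rintro (⟨h0, j, hjb, hjW⟩ | ⟨h0, hlast, hW⟩)
        · refine ⟨by rw [hx0]; exact h0, j.castSucc, by rw [hxc]; exact hjb, ?_⟩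
          intro i hi
          have hil : i < Fin.last (m + 1) := lt_trans hi (Fin.castSucc_lt_last j)
          obtain ⟨i', rfl⟩ :=
            Fin.exists_castSucc_eq.mpr (Fin.lt_last_iff_ne_last.mp hil)
          rw [hxc]
          exact hjW i' (Fin.castSucc_lt_castSucc_iff.mp hi)
        · exact ⟨h0, Fin.last (m + 1), hlast,
            fun i hi => (hV' (x i)).mpr (hW i hi)⟩
    by_cases h1 : QP V a b m y <;> by_cases h2 : AP W a b m x
    · exact absurd ⟨h1, h2⟩ hdisj
    · rw [if_pos (hiff.mpr (Or.inl h1)), if_pos h1, if_neg h2, add_zero]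
    · rw [if_pos (hiff.mpr (Or.inr h2)), if_neg h1, if_pos h2, zero_add]
    · rw [if_neg (fun h => (hiff.mp h).elim h1 h2), if_neg h1, if_neg h2, add_zero]
  have key : ∀ y : Fin (m + 1) → Z,
      (∑ z : Z, if QP V a b m y then pathProb P (Fin.snoc y z : Fin (m + 1 + 1) → Z) else 0)
      = if QP V a b m y then pathProb P y else 0 := by
    intro y
    by_cases h : QP V a b m y
    · simp only [h, if_true]
      simp_rw [pathProb_snoc]
      rw [← Finset.mul_sum, hP.2, mul_one]
    · simp [h]
  rw [firstVisitProb_eq P V a b (m + 1), Finset.sum_filter, sum_snoc]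
  refine ((Finset.sum_congr rfl fun y _ => Finset.sum_congr rfl fun z _ => hsplit y z).trans ?_)
  refine ((Finset.sum_congr rfl fun y _ => Finset.sum_add_distrib).trans ?_)
  rw [Finset.sum_add_distrib]
  congr 1
  · refine ((Finset.sum_congr rfl fun y _ => key y).trans ?_)
    rw [firstVisitProb_eq P V a b m, Finset.sum_filter]
  · rw [arrowTerm_eq P W a b m, Finset.sum_filter]
    exact (sum_snoc (m + 1) (fun x => if AP W a b m x then pathProb P x else 0)).symm

lemma firstVisit_zero (V : Finset Z) (a b : Z) (hab : a ≠ b) :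
    firstVisitProb P V a b 0 = 0 := by
  rw [firstVisitProb_eq P V a b 0, Finset.filter_false_of_mem, Finset.sum_empty]
  rintro x - ⟨h0, j, hjb, -⟩
  have hj : j = 0 := Fin.fin_one_eq_zero j
  rw [hj] at hjb
  exact hab (h0.symm.trans hjb)

lemma arrowTerm_nonneg (h0 : ∀ a b, 0 ≤ P a b) (W : Finset Z) (a b : Z) (m : ℕ) :
    0 ≤ arrowTerm P W a b m :=
  Finset.sum_nonneg fun x _ => pathProb_nonneg P h0 x

lemma firstVisit_le_one (hP : RowStochastic P) (V : Finset Z) (a b : Z) (m : ℕ) :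
    firstVisitProb P V a b m ≤ 1 := by
  rw [← sum_pathProb P hP a m, firstVisitProb_eq P V a b m]
  apply Finset.sum_le_sum_of_subset_of_nonneg
  · intro x hx
    rw [Finset.mem_filter] at hx ⊢
    exact ⟨hx.1, hx.2.1⟩
  · intro x _ _
    exact pathProb_nonneg P hP.1 x

lemma firstVisit_formula (hP : RowStochastic P) (V W : Finset Z) (a b : Z)
    (hbV : b ∈ V) (hV : ∀ c, c ∈ V ↔ c ∈ W ∧ c ≠ a) (hab : a ≠ b) (m : ℕ) :
    firstVisitProb P V a b m = ∑ k ∈ Finset.range m, arrowTerm P W a b k := by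
  induction m with
  | zero => simpa using firstVisit_zero P V a b hab
  | succ m ih => rw [firstVisit_succ P hP V W a b hbV hV m, ih, Finset.sum_range_succ]

end aux


theorem stmt_6 {Z : Type*} [Fintype Z] [Nonempty Z] [DecidableEq Z] (P : Z → Z → ℝ)
    (hP : RowStochastic P) (hirr : IsIrreducibleChain P)
    (W : Finset Z) (hW : 2 ≤ W.card) (a b : Z) (ha : a ∈ W) (hb : b ∈ W) (hab : a ≠ b) :
    Filter.Tendsto (fun m : ℕ => firstVisitProb P (W.erase a) a b m)
      Filter.atTop (nhds (arrowProb P W a b)) := by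
  have hV : ∀ c, c ∈ W.erase a ↔ c ∈ W ∧ c ≠ a := by
    intro c; rw [Finset.mem_erase]; tauto
  have hbV : b ∈ W.erase a := (hV b).mpr ⟨hb, Ne.symm hab⟩
  have hform : ∀ m, firstVisitProb P (W.erase a) a b m
      = ∑ k ∈ Finset.range m, arrowTerm P W a b k :=
    firstVisit_formula P hP (W.erase a) W a b hbV hV hab
  have hsum : Summable (arrowTerm P W a b) := by
    apply summable_of_sum_range_le (c := 1) (fun n => arrowTerm_nonneg P hP.1 W a b n)
    intro n
    rw [← hform n]
    exact firstVisit_le_one P hP (W.erase a) a b n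
  rw [arrowProb_eq_tsum P W a b]
  exact hsum.hasSum.tendsto_sum_nat.congr fun n => (hform n).symm
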